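/- For a forest T_v rooted at a hypernode v with S(v) nonempty and all relevant subtree costs positive, the squared coefficient of variation of the SEI estimate satisfies the recursive bound: CV²(|v|·C_SEI(T_v)) + 1 ≤ Σ_{w ∈ H(v)} [ 1 / C(|S(v)|−1, |w|−1) ] · [ r(S(v)) / r(w) ] · ( Cost(T_w) / Cost(T_{S(v)}) )² · ( CV²(|w|·C_SEI(T_w)) + 1 ). (Paper's Theorem 5.) -/

import Mathlib

open Finset

/-- A finite rooted tree on a finite node type `V`.  The root is its own parent,
every non-root node has a parent whose depth is one smaller, and the root is the
unique node of depth `0`. -/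
structure FinRootedTree (V : Type) [Fintype V] [DecidableEq V] where
  root : V
  parent : V → V
  depth : V → ℕ
  depth_root : depth root = 0
  parent_root : parent root = root
  depth_parent : ∀ v, v ≠ root → depth (parent v) + 1 = depth v
  eq_root_of_depth_zero : ∀ v, depth v = 0 → v = root

namespace FinRootedTree

variable {V : Type} [Fintype V] [DecidableEq V]

/-- The set of children of a node. -/
def children (T : FinRootedTree V) (x : V) : Finset V :=
  Finset.univ.filter fun w => w ≠ T.root ∧ T.parent w = x

/-- `S(v)`: the set of all children of nodes of a hypernode `v`. -/
def succs (T : FinRootedTree V) (v : Finset V) : Finset V :=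
  v.biUnion T.children

/-- The set of nodes of the subtree rooted at `x` (the descendants of `x`,
including `x` itself). -/
def desc (T : FinRootedTree V) (x : V) : Finset V :=
  Finset.univ.filter fun w =>
    x ∈ (Finset.range (T.depth w + 1)).image fun k => T.parent^[k] w

/-- `Cost(T_x)`: the total cost of the subtree rooted at `x`. -/
noncomputable def subtreeCost (T : FinRootedTree V) (c : V → ℝ) (x : V) : ℝ :=
  ∑ w ∈ T.desc x, c w

/-- `Cost(T_v)`: the total cost of the forest rooted at the hypernode `v`. -/
noncomputable def forestCost (T : FinRootedTree V) (c : V → ℝ) (v : Finset V) : ℝ :=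
  ∑ x ∈ v, T.subtreeCost c x

/-- `H(v)`: the hyperchildren of `v` for budget `B`, i.e. the subsets of `S(v)`
of size `min B |S(v)|`. -/
def hyper (T : FinRootedTree V) (B : ℕ) (v : Finset V) : Finset (Finset V) :=
  (T.succs v).powersetCard (min B (T.succs v).card)

/-- A hypernode: a nonempty set of distinct nodes, all at the same depth. -/
def IsHypernode (T : FinRootedTree V) (v : Finset V) : Prop :=
  v.Nonempty ∧ ∀ a ∈ v, ∀ b ∈ v, T.depth a = T.depth b

/-- Expectation functional of the SEI estimator `C_SEI(T_v)` (with importance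
function `r`): `seiE T c B r fuel v g` is `E[g(C_SEI(T_v))]`, defined by the
recursion of Algorithm 2, where the hypernode `w` is drawn from `H(v)` with
probability `r(w) / (r(S(v)) * C(|S(v)|-1, |w|-1))`, with enough fuel to reach
the leaves. -/
noncomputable def seiE (T : FinRootedTree V) (c : V → ℝ) (B : ℕ)
    (r : V → ℝ) : ℕ → Finset V → (ℝ → ℝ) → ℝ
  | 0, v, g => g ((∑ x ∈ v, c x) / (v.card : ℝ))
  | fuel + 1, v, g =>
      if T.succs v = ∅ then g ((∑ x ∈ v, c x) / (v.card : ℝ))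
      else
        ∑ w ∈ T.hyper B v,
          ((∑ a ∈ w, r a) /
              ((∑ a ∈ T.succs v, r a) *
                ((((T.succs v).card - 1).choose (w.card - 1) : ℕ) : ℝ))) *
            seiE T c B r fuel w fun y =>
              g ((∑ x ∈ v, c x) / (v.card : ℝ) +
                ((w.card : ℝ) / (v.card : ℝ)) *
                  ((∑ a ∈ T.succs v, r a) / (∑ a ∈ w, r a)) * y)

/-- `Var(|v| * C_SEI(T_v))`. -/
noncomputable def seiVar (T : FinRootedTree V) (c : V → ℝ) (B : ℕ) (r : V → ℝ)
    (fuel : ℕ) (v : Finset V) : ℝ :=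
  seiE T c B r fuel v (fun y => ((v.card : ℝ) * y) ^ 2) -
    (seiE T c B r fuel v fun y => (v.card : ℝ) * y) ^ 2

/-- `CV²(|v| * C_SEI(T_v)) = Var(|v| * C_SEI(T_v)) / E[|v| * C_SEI(T_v)]²`. -/
noncomputable def seiCV2 (T : FinRootedTree V) (c : V → ℝ) (B : ℕ) (r : V → ℝ)
    (fuel : ℕ) (v : Finset V) : ℝ :=
  seiVar T c B r fuel v /
    (seiE T c B r fuel v fun y => (v.card : ℝ) * y) ^ 2

set_option linter.unusedSectionVars false
variable {T : FinRootedTree V}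

lemma depth_iterate {T : FinRootedTree V} (x : V) : ∀ k, k ≤ T.depth x → T.depth (T.parent^[k] x) = T.depth x - k := by
  intro k
  induction k with
  | zero => simp
  | succ k ih =>
    intro hk
    have h1 : T.depth (T.parent^[k] x) = T.depth x - k := ih (le_of_lt (Nat.lt_of_succ_le hk))
    have hne : T.parent^[k] x ≠ T.root := by
      intro h
      rw [h, T.depth_root] at h1
      omega
    have := T.depth_parent _ hne
    rw [Function.iterate_succ_apply']
    omega

lemma depth_lt_card (x : V) : T.depth x < Fintype.card V := by
  have hinj : Set.InjOn (fun k => T.parent^[k] x) (Finset.range (T.depth x + 1)) := by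
    intro a ha b hb hab
    simp only [Finset.coe_range, Set.mem_Iio] at ha hb
    have h1 := depth_iterate (T := T) x a (by omega)
    have h2 := depth_iterate (T := T) x b (by omega)
    simp only at hab
    rw [hab] at h1
    omega
  have := Finset.card_le_card_of_injOn _ (fun a _ => Finset.mem_univ (T.parent^[a] x)) hinj
  simp only [Finset.card_range, Finset.card_univ] at this
  omega

lemma mem_desc_iff {x w : V} : w ∈ T.desc x ↔ ∃ k ≤ T.depth w, T.parent^[k] w = x := by
  simp [desc, Nat.lt_succ_iff, eq_comm]

lemma self_mem_desc (x : V) : x ∈ T.desc x := mem_desc_iff.2 ⟨0, Nat.zero_le _, rfl⟩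

lemma depth_of_mem_children {x y : V} (hy : y ∈ T.children x) :
    T.depth y = T.depth x + 1 := by
  simp only [children, Finset.mem_filter] at hy
  have := T.depth_parent y hy.2.1
  rw [hy.2.2] at this
  omega

lemma desc_eq (x : V) :
    T.desc x = {x} ∪ (T.children x).biUnion T.desc := by
  ext w
  simp only [Finset.mem_union, Finset.mem_singleton, Finset.mem_biUnion, mem_desc_iff]
  constructor
  · rintro ⟨k, hk, rfl⟩
    rcases Nat.eq_zero_or_pos k with rfl | hkpos
    · left; rfl
    right
    refine ⟨T.parent^[k-1] w, ?_, k - 1, by omega, rfl⟩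
    have hd := depth_iterate (T := T) w (k-1) (by omega)
    have hne : T.parent^[k-1] w ≠ T.root := by
      intro h
      have hdx := depth_iterate (T := T) w k hk
      rw [h, T.depth_root] at hd
      rw [show k = (k-1)+1 by omega, Function.iterate_succ_apply'] at hdx
      rw [h, T.parent_root, T.depth_root] at hdx
      omega
    simp only [children, Finset.mem_filter, Finset.mem_univ, true_and]
    refine ⟨hne, ?_⟩
    conv_rhs => rw [show k = k-1+1 from by omega]
    rw [Function.iterate_succ_apply']
  · rintro (rfl | ⟨y, hy, k, hk, rfl⟩)
    · exact ⟨0, Nat.zero_le _, rfl⟩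
    simp only [children, Finset.mem_filter, Finset.mem_univ, true_and] at hy
    refine ⟨k + 1, ?_, by rw [Function.iterate_succ_apply', hy.2]⟩
    have hd := depth_iterate (T := T) w k hk
    have := T.depth_parent _ hy.1
    rw [hy.2] at this
    omega

lemma depth_le_of_mem_desc {x w : V} (hw : w ∈ T.desc x) : T.depth x ≤ T.depth w := by
  obtain ⟨k, hk, rfl⟩ := mem_desc_iff.1 hw
  rw [depth_iterate (T := T) w k hk]
  omega

lemma eq_of_mem_desc {x y w : V} (hx : w ∈ T.desc x) (hy : w ∈ T.desc y)
    (hxy : T.depth x = T.depth y) : x = y := by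
  obtain ⟨k, hk, rfl⟩ := mem_desc_iff.1 hx
  obtain ⟨l, hl, hly⟩ := mem_desc_iff.1 hy
  have h1 := depth_iterate (T := T) w k hk
  have h2 := depth_iterate (T := T) w l hl
  rw [hly] at h2
  have : k = l := by omega
  rw [← hly, this]

lemma children_pairwiseDisjoint (v : Finset V) :
    Set.PairwiseDisjoint (↑v) T.children := by
  intro x _ y _ hxy
  simp only [Finset.disjoint_left]
  intro z hz hz'
  simp only [children, Finset.mem_filter] at hz hz'
  exact hxy (hz.2.2 ▸ hz'.2.2)

lemma subtreeCost_rec (c : V → ℝ) (x : V) :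
    T.subtreeCost c x = c x + ∑ y ∈ T.children x, T.subtreeCost c y := by
  have hdisj : Disjoint ({x} : Finset V) ((T.children x).biUnion T.desc) := by
    simp only [Finset.disjoint_left, Finset.mem_singleton, Finset.mem_biUnion]
    rintro z rfl ⟨y, hy, hzy⟩
    have h1 := depth_le_of_mem_desc hzy
    have h2 := depth_of_mem_children hy
    omega
  have hpd : Set.PairwiseDisjoint (↑(T.children x)) T.desc := by
    intro a ha b hb hab
    simp only [Finset.disjoint_left]
    intro z hza hzb
    exact hab (eq_of_mem_desc hza hzb
      (by rw [depth_of_mem_children (T := T) (Finset.mem_coe.1 ha),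
              depth_of_mem_children (T := T) (Finset.mem_coe.1 hb)]))
  rw [subtreeCost, desc_eq, Finset.sum_union hdisj, Finset.sum_biUnion hpd,
    Finset.sum_singleton]
  rfl

lemma forestCost_rec (c : V → ℝ) (v : Finset V) :
    T.forestCost c v = (∑ x ∈ v, c x) + T.forestCost c (T.succs v) := by
  rw [forestCost, forestCost, succs, Finset.sum_biUnion (children_pairwiseDisjoint v)]
  rw [← Finset.sum_add_distrib]
  exact Finset.sum_congr rfl fun x _ => subtreeCost_rec c x

lemma forestCost_pos {c : V → ℝ} (hpos : ∀ x : V, 0 < T.subtreeCost c x)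
    {v : Finset V} (hv : v.Nonempty) : 0 < T.forestCost c v :=
  Finset.sum_pos (fun x _ => hpos x) hv

lemma card_filter_mem_powersetCard (s : Finset V) {a : V} (ha : a ∈ s) {k : ℕ}
    (hk1 : 1 ≤ k) :
    ((s.powersetCard k).filter (fun w => a ∈ w)).card = (s.card - 1).choose (k - 1) := by
  have : ((s.powersetCard k).filter (fun w => a ∈ w)).card
      = ((s.erase a).powersetCard (k - 1)).card := by
    refine Finset.card_bij' (fun w _ => w.erase a) (fun w _ => insert a w) ?_ ?_ ?_ ?_
    · intro w hw
      simp only [Finset.mem_filter, Finset.mem_powersetCard] at hw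
      rw [Finset.mem_powersetCard]
      exact ⟨Finset.erase_subset_erase a hw.1.1, by rw [Finset.card_erase_of_mem hw.2, hw.1.2]⟩
    · intro w hw
      rw [Finset.mem_powersetCard] at hw
      have hanw : a ∉ w := fun h => (Finset.mem_erase.1 (hw.1 h)).1 rfl
      simp only [Finset.mem_filter, Finset.mem_powersetCard]
      refine ⟨⟨Finset.insert_subset ha (hw.1.trans (Finset.erase_subset a s)), ?_⟩,
        Finset.mem_insert_self a w⟩
      rw [Finset.card_insert_of_notMem hanw, hw.2]
      omega
    · intro w hw
      simp only [Finset.mem_filter] at hw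
      exact Finset.insert_erase hw.2
    · intro w hw
      rw [Finset.mem_powersetCard] at hw
      exact Finset.erase_insert (fun h => (Finset.mem_erase.1 (hw.1 h)).1 rfl)
  rw [this, Finset.card_powersetCard, Finset.card_erase_of_mem ha]

lemma sum_powersetCard_sum (s : Finset V) (f : V → ℝ) {k : ℕ} (hk1 : 1 ≤ k) :
    ∑ w ∈ s.powersetCard k, ∑ a ∈ w, f a
      = (((s.card - 1).choose (k - 1) : ℕ) : ℝ) * ∑ a ∈ s, f a := by
  have step1 : ∀ w ∈ s.powersetCard k, ∑ a ∈ w, f a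
      = ∑ a ∈ s, if a ∈ w then f a else 0 := by
    intro w hw
    rw [Finset.mem_powersetCard] at hw
    rw [Finset.sum_ite_mem, Finset.inter_eq_right.2 hw.1]
  rw [Finset.sum_congr rfl step1, Finset.sum_comm]
  rw [Finset.mul_sum]
  refine Finset.sum_congr rfl fun a ha => ?_
  rw [Finset.sum_ite, Finset.sum_const_zero, add_zero, Finset.sum_const,
    card_filter_mem_powersetCard s ha hk1, nsmul_eq_mul]

variable {c : V → ℝ} {B : ℕ} {r : V → ℝ}

lemma seiE_zero (v : Finset V) (g : ℝ → ℝ) :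
    seiE T c B r 0 v g = g ((∑ x ∈ v, c x) / (v.card : ℝ)) := by
  rw [seiE]

lemma seiE_succ (fuel : ℕ) (v : Finset V) (g : ℝ → ℝ) :
    seiE T c B r (fuel + 1) v g =
      if T.succs v = ∅ then g ((∑ x ∈ v, c x) / (v.card : ℝ))
      else
        ∑ w ∈ T.hyper B v,
          ((∑ a ∈ w, r a) /
              ((∑ a ∈ T.succs v, r a) *
                ((((T.succs v).card - 1).choose (w.card - 1) : ℕ) : ℝ))) *
            seiE T c B r fuel w fun y =>
              g ((∑ x ∈ v, c x) / (v.card : ℝ) +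
                ((w.card : ℝ) / (v.card : ℝ)) *
                  ((∑ a ∈ T.succs v, r a) / (∑ a ∈ w, r a)) * y) := by
  rw [seiE]

lemma mem_hyper {v w : Finset V} (hS : T.succs v ≠ ∅) (hB : 1 ≤ B)
    (hw : w ∈ T.hyper B v) :
    w ⊆ T.succs v ∧ w.card = min B (T.succs v).card ∧ w.Nonempty := by
  rw [hyper, Finset.mem_powersetCard] at hw
  refine ⟨hw.1, hw.2, ?_⟩
  rw [← Finset.card_pos, hw.2]
  have : 0 < (T.succs v).card := Finset.card_pos.2 (Finset.nonempty_of_ne_empty hS)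
  omega

lemma prob_sum {v : Finset V} (hS : T.succs v ≠ ∅) (hB : 1 ≤ B)
    (hr : ∀ x : V, 0 < r x) :
    ∑ w ∈ T.hyper B v,
      ((∑ a ∈ w, r a) /
        ((∑ a ∈ T.succs v, r a) *
          ((((T.succs v).card - 1).choose (w.card - 1) : ℕ) : ℝ))) = 1 := by
  set n := (T.succs v).card with hn
  set k := min B n with hk
  have hn1 : 1 ≤ n := Finset.card_pos.2 (Finset.nonempty_of_ne_empty hS)
  have hk1 : 1 ≤ k := le_min hB hn1
  have hC : 0 < ((n - 1).choose (k - 1) : ℝ) := by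
    exact_mod_cast Nat.choose_pos (by omega)
  have hrS : 0 < ∑ a ∈ T.succs v, r a :=
    Finset.sum_pos (fun a _ => hr a) (Finset.nonempty_of_ne_empty hS)
  have hcard : ∀ w ∈ T.hyper B v, w.card = k := fun w hw =>
    (Finset.mem_powersetCard.1 hw).2
  rw [Finset.sum_congr rfl (fun w hw => by rw [hcard w hw]), ← Finset.sum_div,
    hyper, ← hn, ← hk, sum_powersetCard_sum _ r hk1]
  rw [div_eq_one_iff_eq (by positivity)]
  ring

lemma prob_nonneg {v : Finset V} (hr : ∀ x : V, 0 < r x) (w : Finset V) :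
    0 ≤ ((∑ a ∈ w, r a) /
        ((∑ a ∈ T.succs v, r a) *
          ((((T.succs v).card - 1).choose (w.card - 1) : ℕ) : ℝ))) := by
  have h1 : 0 ≤ ∑ a ∈ w, r a := Finset.sum_nonneg fun a _ => (hr a).le
  have h2 : 0 ≤ ∑ a ∈ T.succs v, r a := Finset.sum_nonneg fun a _ => (hr a).le
  positivity

lemma seiE_add (fuel : ℕ) (v : Finset V) (g h : ℝ → ℝ) :
    seiE T c B r fuel v (fun y => g y + h y)
      = seiE T c B r fuel v g + seiE T c B r fuel v h := by
  induction fuel generalizing v g h with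
  | zero => rw [seiE_zero, seiE_zero, seiE_zero]
  | succ fuel ih =>
    rw [seiE_succ, seiE_succ, seiE_succ]
    by_cases hS : T.succs v = ∅
    · simp [hS]
    simp only [if_neg hS]
    rw [← Finset.sum_add_distrib]
    exact Finset.sum_congr rfl fun w _ => by rw [ih, mul_add]

lemma seiE_mul (fuel : ℕ) (v : Finset V) (b : ℝ) (g : ℝ → ℝ) :
    seiE T c B r fuel v (fun y => b * g y) = b * seiE T c B r fuel v g := by
  induction fuel generalizing v g with
  | zero => rw [seiE_zero, seiE_zero]
  | succ fuel ih =>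
    rw [seiE_succ, seiE_succ]
    by_cases hS : T.succs v = ∅
    · simp [hS]
    simp only [if_neg hS]
    rw [Finset.mul_sum]
    exact Finset.sum_congr rfl fun w _ => by rw [ih]; ring

lemma seiE_one (hB : 1 ≤ B) (hr : ∀ x : V, 0 < r x) (fuel : ℕ) (v : Finset V) :
    seiE T c B r fuel v (fun _ => 1) = 1 := by
  induction fuel generalizing v with
  | zero => rw [seiE_zero]
  | succ fuel ih =>
    rw [seiE_succ]
    by_cases hS : T.succs v = ∅
    · simp [hS]
    simp only [if_neg hS]
    simp only [ih, mul_one]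
    exact prob_sum hS hB hr

lemma succs_depth {v : Finset V} {y : V} (hy : y ∈ T.succs v) :
    ∃ x ∈ v, T.depth y = T.depth x + 1 := by
  rw [succs, Finset.mem_biUnion] at hy
  obtain ⟨x, hx, hyx⟩ := hy
  exact ⟨x, hx, depth_of_mem_children hyx⟩

lemma succs_empty_of_max {v : Finset V}
    (h : ∀ x ∈ v, Fintype.card V ≤ T.depth x + 1) : T.succs v = ∅ := by
  by_contra hne
  obtain ⟨y, hy⟩ := Finset.nonempty_of_ne_empty hne
  obtain ⟨x, hx, hd⟩ := succs_depth hy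
  have := depth_lt_card (T := T) y
  have := h x hx
  omega

lemma seiE_fuel_succ (fuel : ℕ) :
    ∀ (v : Finset V) (g : ℝ → ℝ),
      (∀ x ∈ v, Fintype.card V ≤ T.depth x + fuel + 1) →
      seiE T c B r (fuel + 1) v g = seiE T c B r fuel v g := by
  induction fuel with
  | zero =>
    intro v g h
    rw [seiE_succ, seiE_zero, if_pos (succs_empty_of_max (by simpa using h))]
  | succ fuel ih =>
    intro v g h
    rw [seiE_succ, seiE_succ]
    by_cases hS : T.succs v = ∅
    · simp [hS]
    simp only [if_neg hS]
    refine Finset.sum_congr rfl fun w hw => ?_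
    have hwsub : w ⊆ T.succs v := (Finset.mem_powersetCard.1 hw).1
    rw [ih w _ ?_]
    intro y hy
    obtain ⟨x, hx, hd⟩ := succs_depth (hwsub hy)
    have := h x hx
    omega

lemma seiE_fuel_card (fuel : ℕ) (hfuel : Fintype.card V ≤ fuel + 1)
    (v : Finset V) (g : ℝ → ℝ) :
    seiE T c B r (Fintype.card V) v g = seiE T c B r fuel v g := by
  induction fuel with
  | zero =>
    have hN : Fintype.card V = 1 := by
      have : 0 < Fintype.card V := Fintype.card_pos_iff.2 ⟨T.root⟩
      omega
    rw [hN]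
    exact seiE_fuel_succ 0 v g (by intro x _; omega)
  | succ fuel ih =>
    rcases Nat.lt_or_ge (Fintype.card V) (fuel + 2) with hlt | hge
    · rw [ih (by omega)]
      exact (seiE_fuel_succ fuel v g (fun x _ => by omega)).symm
    · have heq : Fintype.card V = fuel + 2 := by omega
      rw [heq]
      exact seiE_fuel_succ (fuel + 1) v g (fun x _ => by omega)

lemma seiE_rec_card (hS : T.succs v ≠ ∅) (g : ℝ → ℝ) :
    seiE T c B r (Fintype.card V) v g =
      ∑ w ∈ T.hyper B v,
        ((∑ a ∈ w, r a) /
            ((∑ a ∈ T.succs v, r a) *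
              ((((T.succs v).card - 1).choose (w.card - 1) : ℕ) : ℝ))) *
          seiE T c B r (Fintype.card V) w fun y =>
            g ((∑ x ∈ v, c x) / (v.card : ℝ) +
              ((w.card : ℝ) / (v.card : ℝ)) *
                ((∑ a ∈ T.succs v, r a) / (∑ a ∈ w, r a)) * y) := by
  have hN : 0 < Fintype.card V := Fintype.card_pos_iff.2 ⟨T.root⟩
  obtain ⟨m, hm⟩ : ∃ m, Fintype.card V = m + 1 := ⟨Fintype.card V - 1, by omega⟩
  conv_lhs => rw [hm, seiE_succ]
  rw [if_neg hS]
  refine Finset.sum_congr rfl fun w hw => ?_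
  congr 1
  rw [← seiE_fuel_card m (by omega)]

lemma forestCost_empty (c : V → ℝ) : T.forestCost c (∅ : Finset V) = 0 := by
  simp [forestCost]

lemma seiE_unbiased (hB : 1 ≤ B) (hr : ∀ x : V, 0 < r x) (fuel : ℕ) :
    ∀ v : Finset V, v.Nonempty →
      (∀ x ∈ v, Fintype.card V ≤ T.depth x + fuel + 1) →
      seiE T c B r fuel v (fun y => (v.card : ℝ) * y) = T.forestCost c v := by
  have base : ∀ v : Finset V, v.Nonempty → T.succs v = ∅ →
      (v.card : ℝ) * ((∑ x ∈ v, c x) / (v.card : ℝ)) = T.forestCost c v := by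
    intro v hv hS
    have hcard : (v.card : ℝ) ≠ 0 := by
      simp [Finset.card_eq_zero, Finset.nonempty_iff_ne_empty.1 hv]
    rw [mul_div_cancel₀ _ hcard, forestCost_rec, hS, forestCost_empty, add_zero]
  induction fuel with
  | zero =>
    intro v hv h
    rw [seiE_zero]
    exact base v hv (succs_empty_of_max (by simpa using h))
  | succ fuel ih =>
    intro v hv h
    rw [seiE_succ]
    by_cases hS : T.succs v = ∅
    · rw [if_pos hS]; exact base v hv hS
    rw [if_neg hS]
    have hcard : (v.card : ℝ) ≠ 0 := by
      simp [Finset.card_eq_zero, Finset.nonempty_iff_ne_empty.1 hv]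
    set n := (T.succs v).card with hn
    set k := min B n with hk
    have hn1 : 1 ≤ n := Finset.card_pos.2 (Finset.nonempty_of_ne_empty hS)
    have hk1 : 1 ≤ k := le_min hB hn1
    have hC : (0:ℝ) < ((n - 1).choose (k - 1) : ℕ) := by
      exact_mod_cast Nat.choose_pos (by omega)
    have hrS : 0 < ∑ a ∈ T.succs v, r a :=
      Finset.sum_pos (fun a _ => hr a) (Finset.nonempty_of_ne_empty hS)
    have hsummand : ∀ w ∈ T.hyper B v,
        ((∑ a ∈ w, r a) /
            ((∑ a ∈ T.succs v, r a) * ((((T.succs v).card - 1).choose (w.card - 1) : ℕ) : ℝ))) *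
          seiE T c B r fuel w (fun y =>
            (v.card : ℝ) * ((∑ x ∈ v, c x) / (v.card : ℝ) +
              ((w.card : ℝ) / (v.card : ℝ)) *
                ((∑ a ∈ T.succs v, r a) / (∑ a ∈ w, r a)) * y))
        = ((∑ a ∈ w, r a) /
            ((∑ a ∈ T.succs v, r a) * ((((T.succs v).card - 1).choose (w.card - 1) : ℕ) : ℝ))) *
            (∑ x ∈ v, c x)
          + (1 / (((n - 1).choose (k - 1) : ℕ) : ℝ)) * T.forestCost c w := by
      intro w hw
      obtain ⟨hwsub, hwcard, hwne⟩ := mem_hyper hS hB hw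
      have hrw : 0 < ∑ a ∈ w, r a := Finset.sum_pos (fun a _ => hr a) hwne
      have hfun : (fun y => (v.card : ℝ) * ((∑ x ∈ v, c x) / (v.card : ℝ) +
              ((w.card : ℝ) / (v.card : ℝ)) *
                ((∑ a ∈ T.succs v, r a) / (∑ a ∈ w, r a)) * y))
          = fun y => (∑ x ∈ v, c x) +
              ((∑ a ∈ T.succs v, r a) / (∑ a ∈ w, r a)) * ((w.card : ℝ) * y) := by
        funext y
        field_simp
      rw [hfun]
      have hdepth : ∀ x ∈ w, Fintype.card V ≤ T.depth x + fuel + 1 := by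
        intro y hy
        obtain ⟨x, hx, hd⟩ := succs_depth (hwsub hy)
        have := h x hx
        omega
      have hsplit : (fun y => (∑ x ∈ v, c x) +
              ((∑ a ∈ T.succs v, r a) / (∑ a ∈ w, r a)) * ((w.card : ℝ) * y))
          = fun y => ((∑ x ∈ v, c x) * 1 : ℝ) +
              ((∑ a ∈ T.succs v, r a) / (∑ a ∈ w, r a)) * ((w.card : ℝ) * y) := by
        funext y; ring
      rw [hsplit, seiE_add, seiE_mul, seiE_mul, seiE_one hB hr,
        ih w hwne hdepth, hwcard, ← hk]
      rw [mul_add]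
      congr 1
      · ring
      rw [← mul_assoc]
      congr 1
      rw [← hn]
      field_simp
    rw [Finset.sum_congr rfl hsummand, Finset.sum_add_distrib, ← Finset.sum_mul,
      prob_sum hS hB hr, one_mul, ← Finset.mul_sum]
    have hFsum : ∑ w ∈ T.hyper B v, T.forestCost c w
        = (((n - 1).choose (k - 1) : ℕ) : ℝ) * T.forestCost c (T.succs v) := by
      rw [hyper, ← hn, ← hk]
      exact sum_powersetCard_sum _ (T.subtreeCost c) hk1
    rw [hFsum, forestCost_rec c v]
    field_simp

lemma seiE_sq_le (hB : 1 ≤ B) (hr : ∀ x : V, 0 < r x) (fuel : ℕ) :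
    ∀ (v : Finset V) (f : ℝ → ℝ),
      (seiE T c B r fuel v f) ^ 2 ≤ seiE T c B r fuel v (fun y => f y ^ 2) := by
  induction fuel with
  | zero => intro v f; rw [seiE_zero, seiE_zero]
  | succ fuel ih =>
    intro v f
    rw [seiE_succ, seiE_succ]
    by_cases hS : T.succs v = ∅
    · simp [hS]
    simp only [if_neg hS]
    set P : Finset V → ℝ := fun w =>
      ((∑ a ∈ w, r a) /
        ((∑ a ∈ T.succs v, r a) *
          ((((T.succs v).card - 1).choose (w.card - 1) : ℕ) : ℝ))) with hP
    set E : Finset V → ℝ := fun w => seiE T c B r fuel w (fun y =>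
      f ((∑ x ∈ v, c x) / (v.card : ℝ) +
        ((w.card : ℝ) / (v.card : ℝ)) *
          ((∑ a ∈ T.succs v, r a) / (∑ a ∈ w, r a)) * y)) with hE
    have hPnn : ∀ w, 0 ≤ P w := fun w => prob_nonneg hr w
    have hP1 : ∑ w ∈ T.hyper B v, P w = 1 := prob_sum hS hB hr
    have step1 : (∑ w ∈ T.hyper B v, P w * E w) ^ 2
        ≤ ∑ w ∈ T.hyper B v, P w * (E w) ^ 2 := by
      have hcs := Finset.sum_mul_sq_le_sq_mul_sq (T.hyper B v)
        (fun w => Real.sqrt (P w)) (fun w => Real.sqrt (P w) * E w)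
      have e1 : ∀ w, Real.sqrt (P w) * (Real.sqrt (P w) * E w) = P w * E w := by
        intro w
        rw [← mul_assoc, Real.mul_self_sqrt (hPnn w)]
      have e2 : ∀ w, Real.sqrt (P w) ^ 2 = P w := fun w => Real.sq_sqrt (hPnn w)
      have e3 : ∀ w, (Real.sqrt (P w) * E w) ^ 2 = P w * E w ^ 2 := by
        intro w
        rw [mul_pow, e2]
      simp only [e1, e2, e3] at hcs
      rwa [hP1, one_mul] at hcs
    refine le_trans step1 (Finset.sum_le_sum fun w hw => ?_)
    exact mul_le_mul_of_nonneg_left (ih w _) (hPnn w)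

lemma jensen_sum {ι : Type*} (s : Finset ι) (p x : ι → ℝ) (hp : ∀ i, 0 ≤ p i)
    (hp1 : ∑ i ∈ s, p i = 1) :
    (∑ i ∈ s, p i * x i) ^ 2 ≤ ∑ i ∈ s, p i * x i ^ 2 := by
  have hcs := Finset.sum_mul_sq_le_sq_mul_sq s
    (fun i => Real.sqrt (p i)) (fun i => Real.sqrt (p i) * x i)
  have e1 : ∀ i, Real.sqrt (p i) * (Real.sqrt (p i) * x i) = p i * x i := by
    intro i; rw [← mul_assoc, Real.mul_self_sqrt (hp i)]
  have e2 : ∀ i, Real.sqrt (p i) ^ 2 = p i := fun i => Real.sq_sqrt (hp i)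
  have e3 : ∀ i, (Real.sqrt (p i) * x i) ^ 2 = p i * x i ^ 2 := by
    intro i; rw [mul_pow, e2]
  simp only [e1, e2, e3] at hcs
  rwa [hp1, one_mul] at hcs

set_option maxHeartbeats 2000000 in
/-- Paper's Theorem 5: the squared coefficient of variation of the SEI estimate
satisfies the recursive bound
`CV²(|v|·C_SEI(T_v)) + 1 ≤ ∑_{w ∈ H(v)} (1/C(|S(v)|-1,|w|-1)) · (r(S(v))/r(w)) ·
(Cost(T_w)/Cost(T_{S(v)}))² · (CV²(|w|·C_SEI(T_w)) + 1)`. -/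
theorem sei_cv2_bound (T : FinRootedTree V) (c : V → ℝ) (hc : ∀ x, 0 ≤ c x)
    (hpos : ∀ x : V, 0 < T.subtreeCost c x)
    (B : ℕ) (hB : 1 ≤ B) (r : V → ℝ) (hr : ∀ x : V, 0 < r x)
    (v : Finset V) (hv : T.IsHypernode v) (hS : T.succs v ≠ ∅) :
    seiCV2 T c B r (Fintype.card V) v + 1 ≤
      ∑ w ∈ T.hyper B v,
        (1 / ((((T.succs v).card - 1).choose (w.card - 1) : ℕ) : ℝ)) *
          ((∑ a ∈ T.succs v, r a) / (∑ a ∈ w, r a)) *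
          (T.forestCost c w / T.forestCost c (T.succs v)) ^ 2 *
          (seiCV2 T c B r (Fintype.card V) w + 1) := by
  classical
  have hvne : v.Nonempty := hv.1
  set n := (T.succs v).card with hn
  set k := min B n with hk
  have hn1 : 1 ≤ n := Finset.card_pos.2 (Finset.nonempty_of_ne_empty hS)
  have hk1 : 1 ≤ k := le_min hB hn1
  have hC : (0:ℝ) < (((n - 1).choose (k - 1) : ℕ) : ℝ) := by
    exact_mod_cast Nat.choose_pos (by omega)
  have hrS : 0 < ∑ a ∈ T.succs v, r a :=
    Finset.sum_pos (fun a _ => hr a) (Finset.nonempty_of_ne_empty hS)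
  have hub : ∀ u : Finset V, u.Nonempty →
      seiE T c B r (Fintype.card V) u (fun y => (u.card : ℝ) * y) = T.forestCost c u :=
    fun u hu => seiE_unbiased hB hr (Fintype.card V) u hu (fun x _ => by omega)
  have hcv : ∀ u : Finset V, u.Nonempty →
      seiCV2 T c B r (Fintype.card V) u + 1 =
        seiE T c B r (Fintype.card V) u (fun y => ((u.card : ℝ) * y) ^ 2) /
          (T.forestCost c u) ^ 2 := by
    intro u hu
    have hF : T.forestCost c u ≠ 0 := ne_of_gt (forestCost_pos hpos hu)
    rw [seiCV2, seiVar, hub u hu]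
    rw [div_add_one (pow_ne_zero 2 hF), sub_add_cancel]
  rw [hcv v hvne]
  set a := ∑ x ∈ v, c x with ha
  set s := T.forestCost c (T.succs v) with hs
  have hs0 : 0 < s := forestCost_pos hpos (Finset.nonempty_of_ne_empty hS)
  have ha0 : 0 ≤ a := Finset.sum_nonneg fun x _ => hc x
  have hFv : T.forestCost c v = a + s := forestCost_rec c v
  -- transform the right-hand side
  have hrhs : ∀ w ∈ T.hyper B v,
      (1 / ((((T.succs v).card - 1).choose (w.card - 1) : ℕ) : ℝ)) *
          ((∑ a ∈ T.succs v, r a) / (∑ a ∈ w, r a)) *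
          (T.forestCost c w / T.forestCost c (T.succs v)) ^ 2 *
          (seiCV2 T c B r (Fintype.card V) w + 1)
        = (1 / (((n - 1).choose (k - 1) : ℕ) : ℝ)) *
            ((∑ a ∈ T.succs v, r a) / (∑ a ∈ w, r a)) *
            seiE T c B r (Fintype.card V) w (fun y => ((w.card : ℝ) * y) ^ 2) / s ^ 2 := by
    intro w hw
    obtain ⟨hwsub, hwcard, hwne⟩ := mem_hyper hS hB hw
    have hFw : (0:ℝ) < T.forestCost c w := forestCost_pos hpos hwne
    have hrw : 0 < ∑ a ∈ w, r a := Finset.sum_pos (fun a _ => hr a) hwne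
    rw [hcv w hwne, hwcard, ← hn, ← hk, ← hs]
    field_simp
  rw [Finset.sum_congr rfl hrhs, ← Finset.sum_div]
  -- second moment expansion
  have hterm : ∀ w ∈ T.hyper B v,
      ((∑ a ∈ w, r a) /
          ((∑ a ∈ T.succs v, r a) *
            ((((T.succs v).card - 1).choose (w.card - 1) : ℕ) : ℝ))) *
        seiE T c B r (Fintype.card V) w (fun y =>
          ((v.card : ℝ) * ((∑ x ∈ v, c x) / (v.card : ℝ) +
            ((w.card : ℝ) / (v.card : ℝ)) *
              ((∑ a ∈ T.succs v, r a) / (∑ a ∈ w, r a)) * y)) ^ 2)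
      = ((∑ a ∈ w, r a) /
          ((∑ a ∈ T.succs v, r a) * (((n - 1).choose (k - 1) : ℕ) : ℝ))) * a ^ 2
        + (2 * a * (1 / (((n - 1).choose (k - 1) : ℕ) : ℝ))) * T.forestCost c w
        + (1 / (((n - 1).choose (k - 1) : ℕ) : ℝ)) *
            ((∑ a ∈ T.succs v, r a) / (∑ a ∈ w, r a)) *
            seiE T c B r (Fintype.card V) w (fun y => ((w.card : ℝ) * y) ^ 2) := by
    intro w hw
    obtain ⟨hwsub, hwcard, hwne⟩ := mem_hyper hS hB hw
    have hrw : 0 < ∑ a ∈ w, r a := Finset.sum_pos (fun a _ => hr a) hwne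
    have hcard : ((v.card : ℝ)) ≠ 0 := by
      simp [Finset.card_eq_zero, Finset.nonempty_iff_ne_empty.1 hvne]
    have hfun : (fun y =>
          ((v.card : ℝ) * ((∑ x ∈ v, c x) / (v.card : ℝ) +
            ((w.card : ℝ) / (v.card : ℝ)) *
              ((∑ a ∈ T.succs v, r a) / (∑ a ∈ w, r a)) * y)) ^ 2)
        = fun y =>
            (a ^ 2 * 1 +
              (2 * a * ((∑ a ∈ T.succs v, r a) / (∑ a ∈ w, r a))) * ((w.card : ℝ) * y)) +
            ((∑ a ∈ T.succs v, r a) / (∑ a ∈ w, r a)) ^ 2 * (((w.card : ℝ) * y) ^ 2) := by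
      funext y
      rw [← ha]
      field_simp
      ring
    rw [hfun,
      seiE_add (Fintype.card V) w
        (fun y => a ^ 2 * 1 +
          2 * a * ((∑ a ∈ T.succs v, r a) / ∑ a ∈ w, r a) * ((w.card : ℝ) * y))
        (fun y => ((∑ a ∈ T.succs v, r a) / ∑ a ∈ w, r a) ^ 2 * ((w.card : ℝ) * y) ^ 2),
      seiE_add (Fintype.card V) w
        (fun _ => a ^ 2 * 1)
        (fun y => 2 * a * ((∑ a ∈ T.succs v, r a) / ∑ a ∈ w, r a) * ((w.card : ℝ) * y)),
      seiE_mul (Fintype.card V) w (a ^ 2) (fun _ => 1),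
      seiE_mul (Fintype.card V) w
        (2 * a * ((∑ a ∈ T.succs v, r a) / ∑ a ∈ w, r a)) (fun y => (w.card : ℝ) * y),
      seiE_mul (Fintype.card V) w
        (((∑ a ∈ T.succs v, r a) / ∑ a ∈ w, r a) ^ 2) (fun y => ((w.card : ℝ) * y) ^ 2),
      seiE_one hB hr, hub w hwne, hwcard, ← hn, ← hk]
    field_simp
  have hFsum : ∑ w ∈ T.hyper B v, T.forestCost c w
      = (((n - 1).choose (k - 1) : ℕ) : ℝ) * s := by
    rw [hyper, ← hn, ← hk, hs]
    exact sum_powersetCard_sum _ (T.subtreeCost c) hk1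
  have hE2v : seiE T c B r (Fintype.card V) v (fun y => ((v.card : ℝ) * y) ^ 2)
      = a ^ 2 + 2 * a * s +
        ∑ w ∈ T.hyper B v,
          (1 / (((n - 1).choose (k - 1) : ℕ) : ℝ)) *
            ((∑ a ∈ T.succs v, r a) / (∑ a ∈ w, r a)) *
            seiE T c B r (Fintype.card V) w (fun y => ((w.card : ℝ) * y) ^ 2) := by
    rw [seiE_rec_card hS, Finset.sum_congr rfl hterm, Finset.sum_add_distrib,
      Finset.sum_add_distrib, ← Finset.sum_mul, ← Finset.mul_sum, hFsum]
    have hps : ∑ w ∈ T.hyper B v,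
        ((∑ a ∈ w, r a) /
          ((∑ a ∈ T.succs v, r a) * (((n - 1).choose (k - 1) : ℕ) : ℝ))) = 1 := by
      have := prob_sum (T := T) hS hB hr
      rw [← this]
      refine Finset.sum_congr rfl fun w hw => ?_
      rw [(mem_hyper hS hB hw).2.1, ← hn]
    rw [hps, one_mul]
    congr 1
    field_simp
  rw [hE2v, hFv]
  -- the key inequality Q ≥ s²
  set Q := ∑ w ∈ T.hyper B v,
      (1 / (((n - 1).choose (k - 1) : ℕ) : ℝ)) *
        ((∑ a ∈ T.succs v, r a) / (∑ a ∈ w, r a)) *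
        seiE T c B r (Fintype.card V) w (fun y => ((w.card : ℝ) * y) ^ 2) with hQdef
  have hQ : s ^ 2 ≤ Q := by
    have hsum_eq : ∑ w ∈ T.hyper B v,
        ((∑ a ∈ w, r a) /
          ((∑ a ∈ T.succs v, r a) * (((n - 1).choose (k - 1) : ℕ) : ℝ))) *
          (((∑ a ∈ T.succs v, r a) / (∑ a ∈ w, r a)) * T.forestCost c w) = s := by
      have : ∀ w ∈ T.hyper B v,
          ((∑ a ∈ w, r a) /
            ((∑ a ∈ T.succs v, r a) * (((n - 1).choose (k - 1) : ℕ) : ℝ))) *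
            (((∑ a ∈ T.succs v, r a) / (∑ a ∈ w, r a)) * T.forestCost c w)
          = (1 / (((n - 1).choose (k - 1) : ℕ) : ℝ)) * T.forestCost c w := by
        intro w hw
        obtain ⟨hwsub, hwcard, hwne⟩ := mem_hyper hS hB hw
        have hrw : 0 < ∑ a ∈ w, r a := Finset.sum_pos (fun a _ => hr a) hwne
        field_simp
      rw [Finset.sum_congr rfl this, ← Finset.mul_sum, hFsum]
      field_simp
    have hjen : (∑ w ∈ T.hyper B v,
        ((∑ a ∈ w, r a) /
          ((∑ a ∈ T.succs v, r a) * (((n - 1).choose (k - 1) : ℕ) : ℝ))) *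
          (((∑ a ∈ T.succs v, r a) / (∑ a ∈ w, r a)) * T.forestCost c w)) ^ 2
        ≤ ∑ w ∈ T.hyper B v,
            ((∑ a ∈ w, r a) /
              ((∑ a ∈ T.succs v, r a) * (((n - 1).choose (k - 1) : ℕ) : ℝ))) *
              (((∑ a ∈ T.succs v, r a) / (∑ a ∈ w, r a)) * T.forestCost c w) ^ 2 := by
      refine jensen_sum _ _ _ (fun w => ?_) ?_
      · have h1 : 0 ≤ ∑ a ∈ w, r a := Finset.sum_nonneg fun a _ => (hr a).le
        positivity
      · have := prob_sum (T := T) hS hB hr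
        rw [← this]
        refine Finset.sum_congr rfl fun w hw => ?_
        rw [(mem_hyper hS hB hw).2.1, ← hn]
    have hmono : ∑ w ∈ T.hyper B v,
        ((∑ a ∈ w, r a) /
          ((∑ a ∈ T.succs v, r a) * (((n - 1).choose (k - 1) : ℕ) : ℝ))) *
          (((∑ a ∈ T.succs v, r a) / (∑ a ∈ w, r a)) * T.forestCost c w) ^ 2 ≤ Q := by
      rw [hQdef]
      refine Finset.sum_le_sum fun w hw => ?_
      obtain ⟨hwsub, hwcard, hwne⟩ := mem_hyper hS hB hw
      have hrw : 0 < ∑ a ∈ w, r a := Finset.sum_pos (fun a _ => hr a) hwne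
      have hsq : (T.forestCost c w) ^ 2
          ≤ seiE T c B r (Fintype.card V) w (fun y => ((w.card : ℝ) * y) ^ 2) := by
        have := seiE_sq_le (T := T) (c := c) hB hr (Fintype.card V) w
          (fun y => (w.card : ℝ) * y)
        rwa [hub w hwne] at this
      have key : ((∑ a ∈ w, r a) /
            ((∑ a ∈ T.succs v, r a) * (((n - 1).choose (k - 1) : ℕ) : ℝ))) *
            (((∑ a ∈ T.succs v, r a) / (∑ a ∈ w, r a)) * T.forestCost c w) ^ 2
          = (1 / (((n - 1).choose (k - 1) : ℕ) : ℝ)) *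
              ((∑ a ∈ T.succs v, r a) / (∑ a ∈ w, r a)) * (T.forestCost c w) ^ 2 := by
        field_simp
      rw [key, mul_assoc, mul_assoc]
      refine mul_le_mul_of_nonneg_left ?_ (by positivity)
      exact mul_le_mul_of_nonneg_left hsq (by positivity)
    calc s ^ 2 = (∑ w ∈ T.hyper B v,
        ((∑ a ∈ w, r a) /
          ((∑ a ∈ T.succs v, r a) * (((n - 1).choose (k - 1) : ℕ) : ℝ))) *
          (((∑ a ∈ T.succs v, r a) / (∑ a ∈ w, r a)) * T.forestCost c w)) ^ 2 := by
          rw [hsum_eq]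
      _ ≤ _ := le_trans hjen hmono
  rw [div_le_div_iff₀ (by positivity) (by positivity)]
  nlinarith [mul_nonneg (sub_nonneg.2 hQ) (by nlinarith : (0:ℝ) ≤ a ^ 2 + 2 * a * s)]

end FinRootedTree
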